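/- Let α ∈ (−1,∞), p ∈ (1,∞), and β ∈ (−α−1, (α+1)(p−1)). Then the power weight ω(y) = y^β on ℝ_+ belongs to A_p(ℝ_+,μ) ∩ M_p(μ), i.e., both [ω]_{A_p(ℝ_+,μ)} and [ω]_{M_p(μ)} are finite. -/

import Mathlib

open MeasureTheory ENNReal Set Filter Metric

noncomputable section

/-- Euclidean space of (paper) dimension `d+1 ≥ 1`. -/
abbrev E (d : ℕ) : Type := EuclideanSpace ℝ (Fin (d + 1))

/-- Space-time points `z = (t, x)`. -/
abbrev Pt (d : ℕ) : Type := ℝ × E d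

/-- Tangential space `ℝ^{d}` (first `d` coordinates). -/
abbrev E' (d : ℕ) : Type := EuclideanSpace ℝ (Fin d)

/-- Last (vertical) coordinate `x_d`. -/
def xd (d : ℕ) (x : E d) : ℝ := x (Fin.last d)

/-- Tangential part `x'` of a point. -/
def tang (d : ℕ) (x : E d) : E' d := WithLp.toLp 2 (fun i : Fin d => x i.castSucc)

/-- Glue a tangential point `x'` and a last coordinate `s` into a point of `E d`. -/
def glue (d : ℕ) (y : E' d) (s : ℝ) : E d :=
  WithLp.toLp 2 (Fin.snoc (α := fun _ => ℝ) (WithLp.ofLp y) s)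

/-- The spatial weighted measure `μ(dx) = x_d^α dx` on the upper half space. -/
def muS (d : ℕ) (α : ℝ) : Measure (E d) :=
  ((volume : Measure (E d)).restrict {x | 0 < xd d x}).withDensity
    fun x => ENNReal.ofReal (xd d x ^ α)

/-- The space-time weighted measure `μ(dz) = x_d^α dx dt` on the upper half space. -/
def mu (d : ℕ) (α : ℝ) : Measure (Pt d) :=
  ((volume : Measure (Pt d)).restrict {z : Pt d | 0 < xd d z.2}).withDensity
    fun z => ENNReal.ofReal (xd d z.2 ^ α)

/-- Upper half ball `B_r^+(x₀)`. -/
def Bplus (d : ℕ) (r : ℝ) (x₀ : E d) : Set (E d) := {x | 0 < xd d x ∧ dist x x₀ < r}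

/-- Upper half parabolic cylinder `Q_r^+(z₀)`. -/
def Qplus (d : ℕ) (r : ℝ) (z₀ : Pt d) : Set (Pt d) :=
  (Ioo (z₀.1 - r ^ 2) z₀.1) ×ˢ (Bplus d r z₀.2)

/-- Full parabolic cylinder `Q_r(z₀)` (used as the class of admissible supports of
test functions for the conormal problem in `Q_r^+(z₀)`). -/
def Qfull (d : ℕ) (r : ℝ) (z₀ : Pt d) : Set (Pt d) :=
  (Ioo (z₀.1 - r ^ 2) z₀.1) ×ˢ (Metric.ball z₀.2 r)

/-- The domain `Ω_T = (-∞,T) × ℝ^d_+`, `T ∈ (-∞, +∞]`. -/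
def OmegaT (d : ℕ) (T : EReal) : Set (Pt d) :=
  {z : Pt d | (z.1 : EReal) < T ∧ 0 < xd d z.2}

/-- Admissible supports of test functions for the conormal problem in `Ω_T`
(test functions may be nonzero on `{x_d = 0}`). -/
def OmegaTest (d : ℕ) (T : EReal) : Set (Pt d) := {z : Pt d | (z.1 : EReal) < T}

/-- The `L_p(D,μ)`-norm (valued in `ℝ≥0∞`). -/
def LpN (d : ℕ) (α p : ℝ) (D : Set (Pt d)) {F : Type*} [NormedAddCommGroup F]
    (g : Pt d → F) : ℝ≥0∞ :=
  eLpNorm g (ENNReal.ofReal p) ((mu d α).restrict D)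

/-- Membership in `L_p(D,μ)`. -/
def MemLpD (d : ℕ) (α p : ℝ) (D : Set (Pt d)) {F : Type*} [NormedAddCommGroup F]
    (g : Pt d → F) : Prop :=
  MemLp g (ENNReal.ofReal p) ((mu d α).restrict D)

/-- Smooth compactly supported test functions with support in `U`. -/
def IsTest (d : ℕ) (U : Set (Pt d)) (φ : Pt d → ℝ) : Prop :=
  ContDiff ℝ (⊤ : ℕ∞) φ ∧ HasCompactSupport φ ∧ tsupport φ ⊆ U

/-- Time derivative `∂_t φ` of a (smooth) function. -/
def Dt (d : ℕ) (φ : Pt d → ℝ) (z : Pt d) : ℝ := fderiv ℝ φ z (1, 0)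

/-- Spatial derivative `D_i φ` of a (smooth) function. -/
def Dxi (d : ℕ) (i : Fin (d + 1)) (φ : Pt d → ℝ) (z : Pt d) : ℝ :=
  fderiv ℝ φ z (0, EuclideanSpace.single i 1)

/-- `Du` is the (distributional) spatial gradient of `u` on `D`. -/
def IsWeakGrad (d : ℕ) (D : Set (Pt d)) (u : Pt d → ℝ) (Du : Pt d → E d) : Prop :=
  ∀ φ : Pt d → ℝ, IsTest d (interior D) φ → ∀ i,
    ∫ z in D, u z * Dxi d i φ z = -∫ z in D, Du z i * φ z

/-- `ut` is the (distributional) time derivative of `u` on `D`. -/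
def IsWeakTimeDeriv (d : ℕ) (D : Set (Pt d)) (u ut : Pt d → ℝ) : Prop :=
  ∀ φ : Pt d → ℝ, IsTest d (interior D) φ →
    ∫ z in D, u z * Dt d φ z = -∫ z in D, ut z * φ z

/-- Second order derivatives, recorded as a Euclidean matrix. -/
abbrev M2 (d : ℕ) : Type := EuclideanSpace ℝ (Fin (d + 1) × Fin (d + 1))

/-- `D2u` is the (distributional) Hessian of `u` (whose gradient is `Du`) on `D`. -/
def IsWeakHess (d : ℕ) (D : Set (Pt d)) (Du : Pt d → E d) (D2u : Pt d → M2 d) : Prop :=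
  ∀ φ : Pt d → ℝ, IsTest d (interior D) φ → ∀ i j,
    ∫ z in D, Du z j * Dxi d i φ z = -∫ z in D, D2u z (i, j) * φ z

/-- The representation `u_t = D_i G_i + G_0/x_d + g` in the sense of distributions on `D`. -/
def TimeDerivRep (d : ℕ) (D : Set (Pt d)) (u : Pt d → ℝ) (G : Pt d → E d)
    (G0 g : Pt d → ℝ) : Prop :=
  ∀ φ : Pt d → ℝ, IsTest d (interior D) φ →
    -∫ z in D, u z * Dt d φ z =
      (-∑ i, ∫ z in D, G z i * Dxi d i φ z) + ∫ z in D, (G0 z / xd d z.2 + g z) * φ z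

/-- Membership `u ∈ 𝓗¹_p(D,μ)`, with weak spatial gradient `Du`. -/
def MemH1 (d : ℕ) (α p : ℝ) (D : Set (Pt d)) (u : Pt d → ℝ) (Du : Pt d → E d) : Prop :=
  MemLpD d α p D u ∧ MemLpD d α p D Du ∧ IsWeakGrad d D u Du ∧
    ∃ G G0 g, MemLpD d α p D G ∧ MemLpD d α p D G0 ∧ MemLpD d α p D g ∧
      TimeDerivRep d D u G G0 g

/-- Membership `u ∈ W^{1,2}_p(D,μ)`, with weak derivatives `ut`, `Du`, `D2u`. -/
def MemW12 (d : ℕ) (α p : ℝ) (D : Set (Pt d)) (u ut : Pt d → ℝ) (Du : Pt d → E d)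
    (D2u : Pt d → M2 d) : Prop :=
  MemLpD d α p D u ∧ MemLpD d α p D ut ∧ MemLpD d α p D Du ∧ MemLpD d α p D D2u ∧
    IsWeakTimeDeriv d D u ut ∧ IsWeakGrad d D u Du ∧ IsWeakHess d D Du D2u

/-- The `W^{1,2}_p(D,μ)`-norm. -/
def W12N (d : ℕ) (α p : ℝ) (D : Set (Pt d)) (u ut : Pt d → ℝ) (Du : Pt d → E d)
    (D2u : Pt d → M2 d) : ℝ≥0∞ :=
  LpN d α p D u + LpN d α p D ut + LpN d α p D Du + LpN d α p D D2u

/-- Coefficient matrices on space-time. -/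
abbrev Coeffs (d : ℕ) : Type := Fin (d + 1) → Fin (d + 1) → Pt d → ℝ

/-- Uniform ellipticity and boundedness with constant `κ` on `D`. -/
def UnifElliptic (d : ℕ) (κ : ℝ) (D : Set (Pt d)) (a : Coeffs d) : Prop :=
  ∀ z ∈ D, (∀ ξ : E d, κ * ‖ξ‖ ^ 2 ≤ ∑ i, ∑ j, a i j z * ξ i * ξ j) ∧
    ∀ i j, |a i j z| ≤ κ⁻¹

/-- Bounds `κ ≤ a₀, c₀ ≤ κ⁻¹` on `D`. -/
def CoeffBnd (d : ℕ) (κ : ℝ) (D : Set (Pt d)) (a0 c0 : Pt d → ℝ) : Prop :=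
  ∀ z ∈ D, κ ≤ a0 z ∧ a0 z ≤ κ⁻¹ ∧ κ ≤ c0 z ∧ c0 z ≤ κ⁻¹

/-- `u` (with weak gradient `Du`) is a weak solution of the conormal problem
`x_d^α (a₀ u_t + λ c₀ u) - D_i (x_d^α (a_{ij} D_j u - F_i)) = rhs ⋅ x_d^α f` on `D`,
with the conormal boundary condition encoded by the class `U` of admissible
supports of test functions (which may touch `{x_d = 0}`). -/
def WeakSolDiv (d : ℕ) (α : ℝ) (a : Coeffs d) (a0 c0 : Pt d → ℝ) (lam rhs : ℝ)
    (u : Pt d → ℝ) (Du : Pt d → E d) (F : Pt d → E d) (f : Pt d → ℝ)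
    (D U : Set (Pt d)) : Prop :=
  ∀ φ : Pt d → ℝ, IsTest d U φ →
    (∫ z in D, (-(a0 z * u z * Dt d φ z) + lam * c0 z * u z * φ z) ∂(mu d α)) +
      (∑ i, ∫ z in D, ((∑ j, a i j z * Du z j) - F z i) * Dxi d i φ z ∂(mu d α)) =
      rhs * ∫ z in D, f z * φ z ∂(mu d α)

/-- The average `[c]_{r,z₀}(s)` of `c(·,·,s)` in `(t,x')` over `(t₀-r²,t₀) × B'_r(x₀')`. -/
def coeffAvg (d : ℕ) (c : Pt d → ℝ) (r : ℝ) (z₀ : Pt d) (s : ℝ) : ℝ :=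
  ⨍ w in (Ioo (z₀.1 - r ^ 2) z₀.1) ×ˢ (Metric.ball (tang d z₀.2) r),
    c (w.1, glue d w.2 s)

/-- Mean oscillation condition for a single scalar coefficient:
`⨍_{Q_r^+(z₀)} |c - [c]_{r,z₀}(x_d)| dμ ≤ γ₀` for all `r ∈ (0,R₀]` and admissible `z₀`. -/
def OscA (d : ℕ) (α γ₀ R₀ : ℝ) (c : Pt d → ℝ) : Prop :=
  ∀ r : ℝ, 0 < r → r ≤ R₀ → ∀ z₀ : Pt d, 0 ≤ xd d z₀.2 →
    (∫⁻ z in Qplus d r z₀, ENNReal.ofReal |c z - coeffAvg d c r z₀ (xd d z.2)| ∂(mu d α))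
      ≤ ENNReal.ofReal γ₀ * mu d α (Qplus d r z₀)

/-- Assumption (γ₀,R₀) for the leading coefficients. -/
def OscAssump (d : ℕ) (α γ₀ R₀ : ℝ) (a : Coeffs d) : Prop :=
  ∀ i j, OscA d α γ₀ R₀ (a i j)

/-- Assumption (γ₀,R₀) for non-divergence form equations (on `a_{ij}`, `a₀`, `c₀`). -/
def OscAssumpND (d : ℕ) (α γ₀ R₀ : ℝ) (a : Coeffs d) (a0 c0 : Pt d → ℝ) : Prop :=
  ∀ i j, ∀ r : ℝ, 0 < r → r ≤ R₀ → ∀ z₀ : Pt d, 0 ≤ xd d z₀.2 →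
    (∫⁻ z in Qplus d r z₀,
        ENNReal.ofReal |a i j z - coeffAvg d (a i j) r z₀ (xd d z.2)| ∂(mu d α)) +
      (∫⁻ z in Qplus d r z₀,
        ENNReal.ofReal (|a0 z - coeffAvg d a0 r z₀ (xd d z.2)| +
          |c0 z - coeffAvg d c0 r z₀ (xd d z.2)|) ∂(mu d α))
      ≤ ENNReal.ofReal γ₀ * mu d α (Qplus d r z₀)

/-- The μ-average of an `ℝ≥0∞`-valued function over a space-time set. -/
def avgQ (d : ℕ) (α : ℝ) (D : Set (Pt d)) (g : Pt d → ℝ≥0∞) : ℝ≥0∞ :=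
  (mu d α D)⁻¹ * ∫⁻ z in D, g z ∂(mu d α)

/-- Parabolic Hölder seminorm `[g]_{C^{1/2,1}(D)}`. -/
def hSemi (d : ℕ) (D : Set (Pt d)) {F : Type*} [NormedAddCommGroup F]
    (g : Pt d → F) : ℝ≥0∞ :=
  ⨆ z ∈ D, ⨆ w ∈ D,
    ENNReal.ofReal (‖g z - g w‖ / (|z.1 - w.1| ^ (2⁻¹ : ℝ) + dist z.2 w.2))

/-- `lim_{x_d → 0+} x_d^α g(t, x', x_d) = 0` for a.e. `(t,x')` in `S`. -/
def FlatLimitZero (d : ℕ) (α : ℝ) (g : Pt d → ℝ) (S : Set (ℝ × E' d)) : Prop :=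
  ∀ᵐ w : ℝ × E' d ∂volume, w ∈ S →
    Tendsto (fun s : ℝ => s ^ α * g (w.1, glue d w.2 s)) (nhdsWithin 0 (Ioi 0)) (nhds 0)

section Elliptic

/-- The elliptic `L_p`-norm. -/
def LpNS (d : ℕ) (α p : ℝ) (D : Set (E d)) {F : Type*} [NormedAddCommGroup F]
    (g : E d → F) : ℝ≥0∞ :=
  eLpNorm g (ENNReal.ofReal p) ((muS d α).restrict D)

/-- Elliptic membership in `L_p(D,μ)`. -/
def MemLpS (d : ℕ) (α p : ℝ) (D : Set (E d)) {F : Type*} [NormedAddCommGroup F]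
    (g : E d → F) : Prop :=
  MemLp g (ENNReal.ofReal p) ((muS d α).restrict D)

/-- Elliptic test functions. -/
def IsTestS (d : ℕ) (U : Set (E d)) (φ : E d → ℝ) : Prop :=
  ContDiff ℝ (⊤ : ℕ∞) φ ∧ HasCompactSupport φ ∧ tsupport φ ⊆ U

/-- Spatial derivative. -/
def DxiS (d : ℕ) (i : Fin (d + 1)) (φ : E d → ℝ) (x : E d) : ℝ :=
  fderiv ℝ φ x (EuclideanSpace.single i 1)

/-- Elliptic weak gradient on `D`. -/
def IsWeakGradS (d : ℕ) (D : Set (E d)) (u : E d → ℝ) (Du : E d → E d) : Prop :=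
  ∀ φ : E d → ℝ, IsTestS d (interior D) φ → ∀ i,
    ∫ x in D, u x * DxiS d i φ x = -∫ x in D, Du x i * φ x

/-- Membership `u ∈ W¹_p(D,μ)` with weak gradient `Du`. -/
def MemW1S (d : ℕ) (α p : ℝ) (D : Set (E d)) (u : E d → ℝ) (Du : E d → E d) : Prop :=
  MemLpS d α p D u ∧ MemLpS d α p D Du ∧ IsWeakGradS d D u Du

/-- Elliptic coefficient matrices. -/
abbrev CoeffsS (d : ℕ) : Type := Fin (d + 1) → Fin (d + 1) → E d → ℝ

/-- Elliptic uniform ellipticity/boundedness. -/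
def UnifEllipticS (d : ℕ) (κ : ℝ) (D : Set (E d)) (a : CoeffsS d) : Prop :=
  ∀ x ∈ D, (∀ ξ : E d, κ * ‖ξ‖ ^ 2 ≤ ∑ i, ∑ j, a i j x * ξ i * ξ j) ∧
    ∀ i j, |a i j x| ≤ κ⁻¹

/-- Weak solution of the elliptic conormal problem
`-D_i(x_d^α (a_{ij} D_j u - F_i)) = x_d^α f` on `D`, with admissible test supports `U`. -/
def WeakSolDivS (d : ℕ) (α : ℝ) (a : CoeffsS d) (u : E d → ℝ) (Du : E d → E d)
    (F : E d → E d) (f : E d → ℝ) (D U : Set (E d)) : Prop :=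
  ∀ φ : E d → ℝ, IsTestS d U φ →
    (∑ i, ∫ x in D, ((∑ j, a i j x * Du x j) - F x i) * DxiS d i φ x ∂(muS d α)) =
      ∫ x in D, f x * φ x ∂(muS d α)

/-- The elliptic average `[c]_{r,x₀}(s)` of `c(·,s)` in `x'` over `B'_r(x₀')`. -/
def coeffAvgS (d : ℕ) (c : E d → ℝ) (r : ℝ) (x₀ : E d) (s : ℝ) : ℝ :=
  ⨍ y in Metric.ball (tang d x₀) r, c (glue d y s)

/-- Elliptic Assumption (γ₀,R₀). -/
def OscAssumpS (d : ℕ) (α γ₀ R₀ : ℝ) (a : CoeffsS d) : Prop :=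
  ∀ i j, ∀ r : ℝ, 0 < r → r ≤ R₀ → ∀ x₀ : E d, 0 ≤ xd d x₀ →
    (∫⁻ x in Bplus d r x₀,
        ENNReal.ofReal |a i j x - coeffAvgS d (a i j) r x₀ (xd d x)| ∂(muS d α))
      ≤ ENNReal.ofReal γ₀ * muS d α (Bplus d r x₀)

end Elliptic

section Weights

/-- Weighted mixed-norm `L_{q,p}(Ω_T, ω dμ)`-norm, `ω(t,x) = ω₀(t) ω₁(x)`. -/
def LqpN (d : ℕ) (α q p : ℝ) (ω₀ : ℝ → ℝ) (ω₁ : E d → ℝ) (T : EReal)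
    {F : Type*} [NormedAddCommGroup F] (g : Pt d → F) : ℝ≥0∞ :=
  (∫⁻ t in {t : ℝ | (t : EReal) < T},
      (∫⁻ x, ENNReal.ofReal (‖g (t, x)‖ ^ p * ω₁ x) ∂(muS d α)) ^ (q / p) *
        ENNReal.ofReal (ω₀ t)) ^ (1 / q)

/-- Membership in `L_{q,p}(Ω_T, ω dμ)`. -/
def MemLqp (d : ℕ) (α q p : ℝ) (ω₀ : ℝ → ℝ) (ω₁ : E d → ℝ) (T : EReal)
    {F : Type*} [NormedAddCommGroup F] (g : Pt d → F) : Prop :=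
  AEStronglyMeasurable g ((mu d α).restrict (OmegaT d T)) ∧ LqpN d α q p ω₀ ω₁ T g < ⊤

/-- Membership `u ∈ 𝓗¹_{q,p}(Ω_T, ω dμ)` with weak gradient `Du`. -/
def MemH1qp (d : ℕ) (α q p : ℝ) (ω₀ : ℝ → ℝ) (ω₁ : E d → ℝ) (T : EReal)
    (u : Pt d → ℝ) (Du : Pt d → E d) : Prop :=
  MemLqp d α q p ω₀ ω₁ T u ∧ MemLqp d α q p ω₀ ω₁ T Du ∧
    IsWeakGrad d (OmegaT d T) u Du ∧
    ∃ G G0 g, MemLqp d α q p ω₀ ω₁ T G ∧ MemLqp d α q p ω₀ ω₁ T G0 ∧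
      MemLqp d α q p ω₀ ω₁ T g ∧ TimeDerivRep d (OmegaT d T) u G G0 g

/-- Membership `u ∈ W^{1,2}_{q,p}(Ω_T, ω dμ)` with weak derivatives `ut, Du, D2u`. -/
def MemW12qp (d : ℕ) (α q p : ℝ) (ω₀ : ℝ → ℝ) (ω₁ : E d → ℝ) (T : EReal)
    (u ut : Pt d → ℝ) (Du : Pt d → E d) (D2u : Pt d → M2 d) : Prop :=
  MemLqp d α q p ω₀ ω₁ T u ∧ MemLqp d α q p ω₀ ω₁ T ut ∧
    MemLqp d α q p ω₀ ω₁ T Du ∧ MemLqp d α q p ω₀ ω₁ T D2u ∧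
    IsWeakTimeDeriv d (OmegaT d T) u ut ∧ IsWeakGrad d (OmegaT d T) u Du ∧
    IsWeakHess d (OmegaT d T) Du D2u

/-- The Muckenhoupt constant `[ω]_{A_q(ℝ)}` (over parabolic time intervals). -/
def ApTimeConst (q : ℝ) (ω : ℝ → ℝ) : ℝ≥0∞ :=
  ⨆ (r : ℝ) (_ : 0 < r) (t : ℝ),
    ((volume (Ioo (t - r ^ 2) (t + r ^ 2)))⁻¹ *
        ∫⁻ s in Ioo (t - r ^ 2) (t + r ^ 2), ENNReal.ofReal (ω s)) *
      ((volume (Ioo (t - r ^ 2) (t + r ^ 2)))⁻¹ *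
        ∫⁻ s in Ioo (t - r ^ 2) (t + r ^ 2), ENNReal.ofReal (ω s ^ (1 / (1 - q)))) ^ (q - 1)

/-- The Muckenhoupt constant `[ω]_{A_p(ℝ^d_+, μ)}` (over upper half balls). -/
def ApHalfConst (d : ℕ) (α p : ℝ) (ω : E d → ℝ) : ℝ≥0∞ :=
  ⨆ (r : ℝ) (_ : 0 < r) (x : E d) (_ : 0 ≤ xd d x),
    ((muS d α (Bplus d r x))⁻¹ *
        ∫⁻ y in Bplus d r x, ENNReal.ofReal (ω y) ∂(muS d α)) *
      ((muS d α (Bplus d r x))⁻¹ *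
        ∫⁻ y in Bplus d r x, ENNReal.ofReal (ω y ^ (1 / (1 - p))) ∂(muS d α)) ^ (p - 1)

/-- The Muckenhoupt constant `[ω]_{A_p(ℝ^{d-1})}` (usual balls, Lebesgue measure). -/
def ApEuclConst (d : ℕ) (p : ℝ) (ω : E' d → ℝ) : ℝ≥0∞ :=
  ⨆ (r : ℝ) (_ : 0 < r) (x : E' d),
    ((volume (Metric.ball x r))⁻¹ * ∫⁻ y in Metric.ball x r, ENNReal.ofReal (ω y)) *
      ((volume (Metric.ball x r))⁻¹ *
        ∫⁻ y in Metric.ball x r, ENNReal.ofReal (ω y ^ (1 / (1 - p)))) ^ (p - 1)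

/-- The one-dimensional measure `μ(dy) = y^α dy` on `ℝ_+`. -/
def mu1 (α : ℝ) : Measure ℝ :=
  ((volume : Measure ℝ).restrict (Ioi (0 : ℝ))).withDensity
    fun y => ENNReal.ofReal (y ^ α)

/-- The Muckenhoupt constant `[ω]_{A_p(ℝ_+, μ)}` over the half intervals
`I_r^+(x) = (max(x-r,0), x+r)`, `x ≥ 0`. -/
def ApHalfLineConst (α p : ℝ) (ω : ℝ → ℝ) : ℝ≥0∞ :=
  ⨆ (r : ℝ) (_ : 0 < r) (x : ℝ) (_ : 0 ≤ x),
    ((mu1 α (Ioo (max (x - r) 0) (x + r)))⁻¹ *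
        ∫⁻ y in Ioo (max (x - r) 0) (x + r), ENNReal.ofReal (ω y) ∂(mu1 α)) *
      ((mu1 α (Ioo (max (x - r) 0) (x + r)))⁻¹ *
        ∫⁻ y in Ioo (max (x - r) 0) (x + r),
          ENNReal.ofReal (ω y ^ (1 / (1 - p))) ∂(mu1 α)) ^ (p - 1)

/-- The constant `[ω]_{M_p(μ)}`. -/
def MpConst (α p : ℝ) (ω : ℝ → ℝ) : ℝ≥0∞ :=
  ⨆ (r : ℝ) (_ : 0 < r),
    (∫⁻ y in Ioi r, ENNReal.ofReal (y ^ (-(p * (α + 1))) * ω y) ∂(mu1 α)) ^ (1 / p) *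
      (∫⁻ y in Ioo 0 r, ENNReal.ofReal (ω y ^ (-(1 / (p - 1)))) ∂(mu1 α)) ^ (1 - 1 / p)

end Weights

end

noncomputable section

lemma integrableOn_rpow_Ioo (δ a b : ℝ) (hδ : -1 < δ) :
    IntegrableOn (fun y : ℝ => y ^ δ) (Ioo a b) := by
  rcases le_total a b with hab | hab
  · exact (intervalIntegrable_iff_integrableOn_Ioo_of_le hab).mp
      (intervalIntegral.intervalIntegrable_rpow' hδ)
  · rw [Ioo_eq_empty (by exact fun h => absurd hab (not_le.mpr h))]
    simp

lemma integral_rpow_Ioo (δ a b : ℝ) (hδ : -1 < δ) (hab : a ≤ b) :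
    ∫ y in Ioo a b, y ^ δ = (b ^ (δ + 1) - a ^ (δ + 1)) / (δ + 1) := by
  rw [← integral_Ioc_eq_integral_Ioo, ← intervalIntegral.integral_of_le hab,
    integral_rpow (Or.inl hδ)]

lemma mu1_lint_Ioo (α γ a b : ℝ) (ha : 0 ≤ a) :
    ∫⁻ y in Ioo a b, ENNReal.ofReal (y ^ γ) ∂(mu1 α)
      = ∫⁻ y in Ioo a b, ENNReal.ofReal (y ^ (α + γ)) := by
  have hsub : Ioo a b ⊆ Ioi (0:ℝ) := fun y hy => lt_of_le_of_lt ha hy.1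
  have hm : Measurable fun y : ℝ => ENNReal.ofReal (y ^ α) :=
    (measurable_id.pow measurable_const).ennreal_ofReal
  have hg : Measurable fun y : ℝ => ENNReal.ofReal (y ^ γ) :=
    (measurable_id.pow measurable_const).ennreal_ofReal
  rw [mu1, restrict_withDensity measurableSet_Ioo,
    lintegral_withDensity_eq_lintegral_mul _ hm hg,
    Measure.restrict_restrict measurableSet_Ioo, inter_eq_left.mpr hsub]
  refine setLIntegral_congr_fun measurableSet_Ioo (fun y hy => ?_)
  have h0 : (0:ℝ) < y := lt_of_le_of_lt ha hy.1
  rw [Pi.mul_apply, ← ENNReal.ofReal_mul (Real.rpow_nonneg h0.le _),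
    ← Real.rpow_add h0]

lemma mu1_lint_Ioo_eval (α γ a b : ℝ) (h : -1 < α + γ) (ha : 0 ≤ a) (hab : a ≤ b) :
    ∫⁻ y in Ioo a b, ENNReal.ofReal (y ^ γ) ∂(mu1 α)
      = ENNReal.ofReal (∫ y in Ioo a b, y ^ (α + γ)) := by
  rw [mu1_lint_Ioo α γ a b ha,
    ← ofReal_integral_eq_lintegral_ofReal (integrableOn_rpow_Ioo _ a b h)
      ((ae_restrict_mem measurableSet_Ioo).mono fun y hy =>
        Real.rpow_nonneg (le_of_lt (lt_of_le_of_lt ha hy.1)) _)]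

lemma mu1_Ioo (α a b : ℝ) (hα : -1 < α) (ha : 0 ≤ a) (hab : a ≤ b) :
    mu1 α (Ioo a b) = ENNReal.ofReal (∫ y in Ioo a b, y ^ α) := by
  have : mu1 α (Ioo a b) = ∫⁻ y in Ioo a b, ENNReal.ofReal (y ^ (0:ℝ)) ∂(mu1 α) := by
    simp [Real.rpow_zero]
  rw [this, mu1_lint_Ioo_eval α 0 a b (by simpa using hα) ha hab, add_zero]

lemma mu1_lint_Ioi (α γ r : ℝ) (hr : 0 < r) (h : α + γ < -1) :
    ∫⁻ y in Ioi r, ENNReal.ofReal (y ^ γ) ∂(mu1 α)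
      = ENNReal.ofReal (-r ^ (α + γ + 1) / (α + γ + 1)) := by
  have hsub : Ioi r ⊆ Ioi (0:ℝ) := fun y hy => lt_trans hr hy
  have hm : Measurable fun y : ℝ => ENNReal.ofReal (y ^ α) :=
    (measurable_id.pow measurable_const).ennreal_ofReal
  have hg : Measurable fun y : ℝ => ENNReal.ofReal (y ^ γ) :=
    (measurable_id.pow measurable_const).ennreal_ofReal
  rw [mu1, restrict_withDensity measurableSet_Ioi,
    lintegral_withDensity_eq_lintegral_mul _ hm hg,
    Measure.restrict_restrict measurableSet_Ioi, inter_eq_left.mpr hsub]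
  have : ∫⁻ y in Ioi r, ENNReal.ofReal (y ^ α) * ENNReal.ofReal (y ^ γ)
      = ∫⁻ y in Ioi r, ENNReal.ofReal (y ^ (α + γ)) := by
    refine setLIntegral_congr_fun measurableSet_Ioi (fun y hy => ?_)
    have h0 : (0:ℝ) < y := lt_trans hr hy
    rw [← ENNReal.ofReal_mul (Real.rpow_nonneg h0.le _), ← Real.rpow_add h0]
  simp only [Pi.mul_apply]
  rw [this, ← ofReal_integral_eq_lintegral_ofReal (integrableOn_Ioi_rpow_of_lt h hr)
      ((ae_restrict_mem measurableSet_Ioi).mono fun y hy =>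
        Real.rpow_nonneg (le_of_lt (lt_trans hr hy)) _),
    integral_Ioi_rpow_of_lt h hr]

lemma Ap_bound (α p β : ℝ) (hα : -1 < α) (hp : 1 < p)
    (hβ₁ : -α - 1 < β) (hβ₂ : β < (α + 1) * (p - 1)) :
    ApHalfLineConst α p (fun y => y ^ β) < ⊤ := by
  have hp1 : (0:ℝ) < p - 1 := by linarith
  set γ₂ : ℝ := β * (1 / (1 - p)) with hγ₂
  have hγ₂' : γ₂ = -(β / (p - 1)) := by
    rw [hγ₂, one_div, ← neg_sub p 1, inv_neg, mul_neg, ← div_eq_mul_inv]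
  have he₁ : -1 < α + β := by linarith
  have he₂' : -1 < α + γ₂ := by
    have h1 : β / (p - 1) < α + 1 := (div_lt_iff₀ hp1).mpr (by nlinarith)
    rw [hγ₂']; linarith
  set e₀ : ℝ := α + 1 with he₀
  set e₁ : ℝ := α + β + 1 with he₁d
  set e₂ : ℝ := α + γ₂ + 1 with he₂d
  have he₀p : 0 < e₀ := by rw [he₀]; linarith
  have he₁p : 0 < e₁ := by rw [he₁d]; linarith
  have he₂p : 0 < e₂ := by rw [he₂d]; linarith
  set κ : ℝ := 1 - (2:ℝ) ^ (-e₀) with hκ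
  have hκp : 0 < κ := by
    have := Real.rpow_lt_one_of_one_lt_of_neg (by norm_num : (1:ℝ) < 2)
      (by linarith : -e₀ < 0)
    rw [hκ]; linarith
  set Cap : ℝ := max ((e₀ / (e₁ * κ)) * (e₀ / (e₂ * κ)) ^ (p - 1))
    ((2:ℝ) ^ |β| * (2:ℝ) ^ |β|) with hCap
  refine lt_of_le_of_lt ?_ (ofReal_lt_top (r := Cap))
  unfold ApHalfLineConst
  refine iSup_le fun r => iSup_le fun hr => iSup_le fun x => iSup_le fun hx => ?_
  set a : ℝ := max (x - r) 0 with hadef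
  set b : ℝ := x + r with hbdef
  have ha : 0 ≤ a := le_max_right _ _
  have hb : 0 < b := by rw [hbdef]; linarith
  have hab : a < b := by
    rw [hadef, hbdef]; exact max_lt (by linarith) (by linarith)
  set m : ℝ := ∫ y in Ioo a b, y ^ α with hmdef
  set L₁ : ℝ := ∫ y in Ioo a b, y ^ (α + β) with hL₁def
  set L₂ : ℝ := ∫ y in Ioo a b, y ^ (α + γ₂) with hL₂def
  have hmval : m = (b ^ e₀ - a ^ e₀) / e₀ := by
    rw [hmdef, integral_rpow_Ioo α a b hα hab.le, ← he₀]
  have hmpos : 0 < m := by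
    rw [hmval]
    have := Real.rpow_lt_rpow ha hab he₀p
    exact div_pos (by linarith) he₀p
  have hμ : mu1 α (Ioo a b) = ENNReal.ofReal m := by
    rw [mu1_Ioo α a b hα ha hab.le, ← hmdef]
  have hA : (∫⁻ y in Ioo a b, ENNReal.ofReal ((fun y : ℝ => y ^ β) y) ∂(mu1 α))
      = ENNReal.ofReal L₁ := by
    simp only
    rw [mu1_lint_Ioo_eval α β a b he₁ ha hab.le, ← hL₁def]
  have hB : (∫⁻ y in Ioo a b, ENNReal.ofReal ((fun y : ℝ => y ^ β) y ^ (1 / (1 - p))) ∂(mu1 α))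
      = ENNReal.ofReal L₂ := by
    have h1 : (∫⁻ y in Ioo a b, ENNReal.ofReal ((fun y : ℝ => y ^ β) y ^ (1 / (1 - p))) ∂(mu1 α))
        = ∫⁻ y in Ioo a b, ENNReal.ofReal (y ^ γ₂) ∂(mu1 α) := by
      refine setLIntegral_congr_fun measurableSet_Ioo (fun y hy => ?_)
      simp only
      rw [← Real.rpow_mul (le_of_lt (lt_of_le_of_lt ha hy.1)), ← hγ₂]
    rw [h1, mu1_lint_Ioo_eval α γ₂ a b he₂' ha hab.le, ← hL₂def]
  obtain ⟨c₁, c₂, hc₁, hc₂, hbd₁, hbd₂, hprod⟩ :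
      ∃ c₁ c₂ : ℝ, 0 ≤ c₁ ∧ 0 ≤ c₂ ∧ L₁ ≤ c₁ * m ∧ L₂ ≤ c₂ * m ∧ c₁ * c₂ ^ (p - 1) ≤ Cap := by
    rcases le_or_gt (2 * a) b with h2 | h2
    · -- case near the boundary
      have hm_lb : κ * (b ^ e₀ / e₀) ≤ m := by
        have h2a : a ^ e₀ ≤ b ^ e₀ * 2 ^ (-e₀) := by
          have hle : a ≤ b / 2 := by linarith
          have h3 := Real.rpow_le_rpow ha hle he₀p.le
          have hdiv : (b / 2) ^ e₀ = b ^ e₀ * 2 ^ (-e₀) := by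
            rw [Real.div_rpow hb.le (by norm_num), Real.rpow_neg (by norm_num),
              div_eq_mul_inv]
          linarith [hdiv ▸ h3]
        have hexp : κ * b ^ e₀ = b ^ e₀ - b ^ e₀ * 2 ^ (-e₀) := by rw [hκ]; ring
        rw [hmval, ← mul_div_assoc]
        exact (div_le_div_iff_of_pos_right he₀p).mpr (by linarith)
      have key1 : ∀ γ' e' : ℝ, e' = α + γ' + 1 → 0 < e' →
          (∫ y in Ioo a b, y ^ (α + γ')) ≤ (b ^ γ' * (e₀ / (e' * κ))) * m := by
        intro γ' e' he'd he'p
        have hγ'lb : -1 < α + γ' := by linarith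
        have hbe' : b ^ γ' * b ^ e₀ = b ^ e' := by
          rw [← Real.rpow_add hb]; congr 1; rw [he₀] at *; linarith
        have hcoef : (b ^ γ' * (e₀ / (e' * κ))) * (κ * (b ^ e₀ / e₀)) = b ^ e' / e' := by
          rw [← hbe']; field_simp
        have hub : (∫ y in Ioo a b, y ^ (α + γ')) ≤ b ^ e' / e' := by
          rw [integral_rpow_Ioo _ a b hγ'lb hab.le, show α + γ' + 1 = e' from he'd.symm]
          have h4 : b ^ e' - a ^ e' ≤ b ^ e' := by
            linarith [Real.rpow_nonneg ha e']
          exact (div_le_div_iff_of_pos_right he'p).mpr h4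
        calc (∫ y in Ioo a b, y ^ (α + γ')) ≤ b ^ e' / e' := hub
          _ = (b ^ γ' * (e₀ / (e' * κ))) * (κ * (b ^ e₀ / e₀)) := hcoef.symm
          _ ≤ (b ^ γ' * (e₀ / (e' * κ))) * m :=
            mul_le_mul_of_nonneg_left hm_lb (by positivity)
      refine ⟨b ^ β * (e₀ / (e₁ * κ)), b ^ γ₂ * (e₀ / (e₂ * κ)), by positivity, by positivity,
        key1 β e₁ (by rw [he₁d]) he₁p, key1 γ₂ e₂ (by rw [he₂d]) he₂p, ?_⟩
      have hz : β + γ₂ * (p - 1) = 0 := by rw [hγ₂']; field_simp; ring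
      have heq : (b ^ β * (e₀ / (e₁ * κ))) * (b ^ γ₂ * (e₀ / (e₂ * κ))) ^ (p - 1)
          = (e₀ / (e₁ * κ)) * (e₀ / (e₂ * κ)) ^ (p - 1) := by
        rw [Real.mul_rpow (Real.rpow_nonneg hb.le _) (by positivity),
          ← Real.rpow_mul hb.le]
        calc b ^ β * (e₀ / (e₁ * κ)) * (b ^ (γ₂ * (p - 1)) * (e₀ / (e₂ * κ)) ^ (p - 1))
            = b ^ β * b ^ (γ₂ * (p - 1)) * ((e₀ / (e₁ * κ)) * (e₀ / (e₂ * κ)) ^ (p - 1)) := by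
              ring
          _ = b ^ (β + γ₂ * (p - 1)) * ((e₀ / (e₁ * κ)) * (e₀ / (e₂ * κ)) ^ (p - 1)) := by
              rw [← Real.rpow_add hb]
          _ = _ := by rw [hz, Real.rpow_zero, one_mul]
      rw [heq, hCap]
      exact le_max_left _ _
    · -- case away from the boundary
      have ha' : 0 < a := by linarith
      have hpt : ∀ γ' : ℝ, ∀ y ∈ Ioo a b, y ^ γ' ≤ 2 ^ |γ'| * a ^ γ' := by
        intro γ' y hy
        have hy0 : 0 < y := lt_trans ha' hy.1
        rcases le_or_gt 0 γ' with hg | hg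
        · have h1 : y ^ γ' ≤ (2 * a) ^ γ' :=
            Real.rpow_le_rpow hy0.le (by linarith [hy.2]) hg
          rw [Real.mul_rpow (by norm_num) ha'.le] at h1
          rwa [abs_of_nonneg hg]
        · have h1 : y ^ γ' ≤ a ^ γ' := Real.rpow_le_rpow_of_nonpos ha' hy.1.le hg.le
          have h2 : (1:ℝ) ≤ 2 ^ |γ'| := Real.one_le_rpow (by norm_num) (abs_nonneg _)
          nlinarith [Real.rpow_nonneg ha'.le γ']
      have key2 : ∀ γ' : ℝ, -1 < α + γ' →
          (∫ y in Ioo a b, y ^ (α + γ')) ≤ (2 ^ |γ'| * a ^ γ') * m := by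
        intro γ' hγ'
        have hint : ∫ y in Ioo a b, (2 ^ |γ'| * a ^ γ') * y ^ α = (2 ^ |γ'| * a ^ γ') * m := by
          rw [integral_const_mul, ← hmdef]
        rw [← hint]
        refine setIntegral_mono_on (integrableOn_rpow_Ioo _ a b hγ')
          ((integrableOn_rpow_Ioo α a b hα).const_mul _) measurableSet_Ioo fun y hy => ?_
        have hy0 : 0 < y := lt_trans ha' hy.1
        calc y ^ (α + γ') = y ^ α * y ^ γ' := Real.rpow_add hy0 α γ'
          _ ≤ y ^ α * (2 ^ |γ'| * a ^ γ') :=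
            mul_le_mul_of_nonneg_left (hpt γ' y hy) (Real.rpow_nonneg hy0.le α)
          _ = (2 ^ |γ'| * a ^ γ') * y ^ α := mul_comm _ _
      refine ⟨2 ^ |β| * a ^ β, 2 ^ |γ₂| * a ^ γ₂, by positivity, by positivity,
        key2 β he₁, key2 γ₂ he₂', ?_⟩
      have habs : |γ₂| * (p - 1) = |β| := by
        rw [hγ₂', abs_neg, abs_div, abs_of_pos hp1, div_mul_cancel₀ _ hp1.ne']
      have hz : β + γ₂ * (p - 1) = 0 := by rw [hγ₂']; field_simp; ring
      have heq : (2 ^ |β| * a ^ β) * ((2:ℝ) ^ |γ₂| * a ^ γ₂) ^ (p - 1)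
          = (2:ℝ) ^ |β| * 2 ^ |β| := by
        rw [Real.mul_rpow (by positivity) (Real.rpow_nonneg ha'.le _),
          ← Real.rpow_mul (by norm_num : (0:ℝ) ≤ 2), habs, ← Real.rpow_mul ha'.le]
        calc (2:ℝ) ^ |β| * a ^ β * (2 ^ |β| * a ^ (γ₂ * (p - 1)))
            = ((2:ℝ) ^ |β| * 2 ^ |β|) * (a ^ β * a ^ (γ₂ * (p - 1))) := by ring
          _ = ((2:ℝ) ^ |β| * 2 ^ |β|) * a ^ (β + γ₂ * (p - 1)) := by
              rw [← Real.rpow_add ha']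
          _ = _ := by rw [hz, Real.rpow_zero, mul_one]
      rw [heq, hCap]
      exact le_max_right _ _
  -- assemble in ℝ≥0∞
  have hm0 : ENNReal.ofReal m ≠ 0 := (ENNReal.ofReal_pos.mpr hmpos).ne'
  have hfac : ∀ c L : ℝ, 0 ≤ c → L ≤ c * m →
      (ENNReal.ofReal m)⁻¹ * ENNReal.ofReal L ≤ ENNReal.ofReal c := by
    intro c L hc hL
    calc (ENNReal.ofReal m)⁻¹ * ENNReal.ofReal L
        ≤ (ENNReal.ofReal m)⁻¹ * ENNReal.ofReal (c * m) :=
          mul_le_mul_right (ofReal_le_ofReal hL) _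
      _ = (ENNReal.ofReal m)⁻¹ * (ENNReal.ofReal c * ENNReal.ofReal m) := by
          rw [ENNReal.ofReal_mul hc]
      _ = ENNReal.ofReal c := by
          rw [mul_comm (ENNReal.ofReal c), ← mul_assoc,
            ENNReal.inv_mul_cancel hm0 ofReal_ne_top, one_mul]
  rw [hμ, hA, hB]
  calc (ENNReal.ofReal m)⁻¹ * ENNReal.ofReal L₁ *
        ((ENNReal.ofReal m)⁻¹ * ENNReal.ofReal L₂) ^ (p - 1)
      ≤ ENNReal.ofReal c₁ * (ENNReal.ofReal c₂) ^ (p - 1) :=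
        mul_le_mul' (hfac c₁ L₁ hc₁ hbd₁)
          (ENNReal.rpow_le_rpow (hfac c₂ L₂ hc₂ hbd₂) (by linarith))
    _ = ENNReal.ofReal (c₁ * c₂ ^ (p - 1)) := by
        rw [ENNReal.ofReal_rpow_of_nonneg hc₂ (by linarith), ← ENNReal.ofReal_mul hc₁]
    _ ≤ ENNReal.ofReal Cap := ofReal_le_ofReal hprod

lemma Mp_bound (α p β : ℝ) (hα : -1 < α) (hp : 1 < p)
    (hβ₁ : -α - 1 < β) (hβ₂ : β < (α + 1) * (p - 1)) :
    MpConst α p (fun y => y ^ β) < ⊤ := by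
  have hp0 : (0:ℝ) < p := by linarith
  have hp1 : (0:ℝ) < p - 1 := by linarith
  set γ₁ : ℝ := -(p * (α + 1)) + β with hγ₁
  set γ₂ : ℝ := β * (-(1 / (p - 1))) with hγ₂
  have hE : α + γ₁ < -1 := by rw [hγ₁]; nlinarith
  have he₂' : -1 < α + γ₂ := by
    have h1 : β / (p - 1) < α + 1 := (div_lt_iff₀ hp1).mpr (by nlinarith)
    have h2 : γ₂ = -(β / (p - 1)) := by rw [hγ₂]; ring
    rw [h2]; linarith
  set E : ℝ := α + γ₁ + 1 with hEdef
  set e₂ : ℝ := α + γ₂ + 1 with he₂def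
  have hEneg : E < 0 := by rw [hEdef]; linarith
  have he₂pos : 0 < e₂ := by rw [he₂def]; linarith
  set K : ℝ := (-E)⁻¹ ^ (1/p) * e₂⁻¹ ^ (1 - 1/p) with hK
  have hinvE : (0:ℝ) ≤ (-E)⁻¹ := inv_nonneg.mpr (by linarith)
  have hinve₂ : (0:ℝ) ≤ e₂⁻¹ := inv_nonneg.mpr he₂pos.le
  refine lt_of_le_of_lt ?_ (ofReal_lt_top (r := K))
  unfold MpConst
  refine iSup_le fun r => iSup_le fun hr => ?_
  have hA : (∫⁻ y in Ioi r, ENNReal.ofReal (y ^ (-(p * (α + 1))) * (fun y : ℝ => y ^ β) y) ∂(mu1 α))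
      = ENNReal.ofReal (r ^ E * (-E)⁻¹) := by
    have h1 : (∫⁻ y in Ioi r, ENNReal.ofReal (y ^ (-(p * (α + 1))) * (fun y : ℝ => y ^ β) y) ∂(mu1 α))
        = ∫⁻ y in Ioi r, ENNReal.ofReal (y ^ γ₁) ∂(mu1 α) := by
      refine setLIntegral_congr_fun measurableSet_Ioi (fun y hy => ?_)
      have h0 : (0:ℝ) < y := lt_trans hr hy
      rw [hγ₁, Real.rpow_add h0]
    rw [h1, mu1_lint_Ioi α γ₁ r hr hE, ← hEdef, inv_neg, mul_neg, ← div_eq_mul_inv, neg_div]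
  have hB : (∫⁻ y in Ioo 0 r, ENNReal.ofReal ((fun y : ℝ => y ^ β) y ^ (-(1 / (p - 1)))) ∂(mu1 α))
      = ENNReal.ofReal (r ^ e₂ * e₂⁻¹) := by
    have h1 : (∫⁻ y in Ioo 0 r, ENNReal.ofReal ((fun y : ℝ => y ^ β) y ^ (-(1 / (p - 1)))) ∂(mu1 α))
        = ∫⁻ y in Ioo 0 r, ENNReal.ofReal (y ^ γ₂) ∂(mu1 α) := by
      refine setLIntegral_congr_fun measurableSet_Ioo (fun y hy => ?_)
      simp only
      rw [← Real.rpow_mul (le_of_lt hy.1), ← hγ₂]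
    rw [h1, mu1_lint_Ioo_eval α γ₂ 0 r he₂' le_rfl hr.le, integral_rpow_Ioo _ 0 r he₂' hr.le,
      ← he₂def, Real.zero_rpow he₂pos.ne', sub_zero, div_eq_mul_inv]
  rw [hA, hB, ENNReal.ofReal_rpow_of_nonneg (by positivity) (by positivity),
    ENNReal.ofReal_rpow_of_nonneg (by positivity) (by linarith [div_le_one_of_le₀ hp.le hp0.le, one_div p]),
    ← ENNReal.ofReal_mul (by positivity)]
  have key : (r ^ E * (-E)⁻¹) ^ (1/p) * (r ^ e₂ * e₂⁻¹) ^ (1 - 1/p) = K := by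
    rw [Real.mul_rpow (Real.rpow_nonneg hr.le _) hinvE,
        Real.mul_rpow (Real.rpow_nonneg hr.le _) hinve₂,
        ← Real.rpow_mul hr.le, ← Real.rpow_mul hr.le]
    have hz : E * (1/p) + e₂ * (1 - 1/p) = 0 := by
      rw [hEdef, he₂def, hγ₁, hγ₂]; field_simp; ring
    calc r ^ (E * (1/p)) * (-E)⁻¹ ^ (1/p) * (r ^ (e₂ * (1 - 1/p)) * e₂⁻¹ ^ (1 - 1/p))
        = r ^ (E * (1/p) + e₂ * (1 - 1/p)) * ((-E)⁻¹ ^ (1/p) * e₂⁻¹ ^ (1 - 1/p)) := by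
          rw [Real.rpow_add hr]; ring
      _ = K := by rw [hz, Real.rpow_zero, one_mul, hK]
  exact le_of_eq (by rw [key])

/-- Remark 1.9: for `β ∈ (-α-1, (α+1)(p-1))` the power weight
`ω(y) = y^β` on `ℝ_+` belongs to `A_p(ℝ_+, μ) ∩ M_p(μ)`, where `μ(dy) = y^α dy`. -/
theorem power_weight_in_Ap_and_Mp
    (α p β : ℝ) (hα : -1 < α) (hp : 1 < p)
    (hβ₁ : -α - 1 < β) (hβ₂ : β < (α + 1) * (p - 1)) :
    ApHalfLineConst α p (fun y => y ^ β) < ⊤ ∧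
      MpConst α p (fun y => y ^ β) < ⊤ :=
  ⟨Ap_bound α p β hα hp hβ₁ hβ₂, Mp_bound α p β hα hp hβ₁ hβ₂⟩

end
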